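/- Let W : ℝ² → ℝ satisfy assumptions (A0)–(A2), let ρ^ini ∈ 𝒫₂(ℝ²), and consider the finite volume scheme with initial values ρ⁰_{ij} = (1/(ΔxΔy)) ρ^ini(C_{ij}). Assume the CFL condition w_∞ (1/Δx + 1/Δy) Δt ≤ 1/2. Then the scheme conserves mass and center of mass: for all n ∈ ℕ, Σ_{i,j∈ℤ²} ρ^n_{ij} Δx Δy = Σ_{i,j∈ℤ²} ρ⁰_{ij} Δx Δy = 1, Σ_{i,j∈ℤ²} x_i ρ^n_{ij} = Σ_{i,j∈ℤ²} x_i ρ⁰_{ij}, and Σ_{i,j∈ℤ²} y_j ρ^n_{ij} = Σ_{i,j∈ℤ²} y_j ρ⁰_{ij} (all these sums being absolutely convergent). -/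

import Mathlib

open MeasureTheory Filter Metric
open scoped RealInnerProductSpace Topology BigOperators NNReal ENNReal Classical

noncomputable section

/-- The extended gradient `∇̂W`: `∇W(x)` for `x ≠ 0` and `0` at the origin. -/
def hatGrad (d : ℕ) (W : EuclideanSpace ℝ (Fin d) → ℝ) (x : EuclideanSpace ℝ (Fin d)) :
    EuclideanSpace ℝ (Fin d) :=
  if x = 0 then 0 else gradient W x

/-- Assumptions (A0)-(A2): `W` is Lipschitz with constant `winf ≥ 0`, even, `W 0 = 0`,
`lam`-convex for some `lam ≤ 0`, continuously differentiable away from the origin,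
with gradient bounded by `winf` away from the origin. -/
structure PointyPotential (d : ℕ) (W : EuclideanSpace ℝ (Fin d) → ℝ) (winf lam : ℝ) : Prop where
  winf_nonneg : 0 ≤ winf
  lipschitz : LipschitzWith (Real.toNNReal winf) W
  even : ∀ x, W (-x) = W x
  zero_val : W 0 = 0
  lam_nonpos : lam ≤ 0
  lamConvex : ConvexOn ℝ Set.univ fun x => W x - lam / 2 * ‖x‖ ^ 2
  diffAway : ∀ x : EuclideanSpace ℝ (Fin d), x ≠ 0 → DifferentiableAt ℝ W x
  gradContinuous : ContinuousOn (gradient W) {x : EuclideanSpace ℝ (Fin d) | x ≠ 0}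
  gradBound : ∀ x : EuclideanSpace ℝ (Fin d), x ≠ 0 → ‖gradient W x‖ ≤ winf

/-- The grid cell `C_{ij} = [iΔx,(i+1)Δx) × [jΔy,(j+1)Δy)` as a subset of `ℝ²`. -/
def cell2 (dx dy : ℝ) (i j : ℤ) : Set (EuclideanSpace ℝ (Fin 2)) :=
  {p : EuclideanSpace ℝ (Fin 2) |
    p 0 ∈ Set.Ico ((i : ℝ) * dx) (((i : ℝ) + 1) * dx) ∧
    p 1 ∈ Set.Ico ((j : ℝ) * dy) (((j : ℝ) + 1) * dy)}

/-- `D_cW_{ij}^{kl} = ∬_{C_{kl}} ∬_{C_{ij}} ∂̂_cW(p − q) dp dq`, where `c = 0` gives the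
`x`-component `∂̂_xW` and `c = 1` the `y`-component `∂̂_yW` of the extended gradient. -/
def DW (W : EuclideanSpace ℝ (Fin 2) → ℝ) (dx dy : ℝ) (c : Fin 2) (i j k l : ℤ) : ℝ :=
  ∫ q in cell2 dx dy k l, ∫ p in cell2 dx dy i j, hatGrad 2 W (p - q) c

/-- The discrete velocity `a_c{}_{ij} = (1/(ΔxΔy)) Σ_{k,ℓ} ρ_{kℓ} D_cW_{ij}^{kℓ}`. -/
def discVel (W : EuclideanSpace ℝ (Fin 2) → ℝ) (dx dy : ℝ) (ρ : ℤ → ℤ → ℝ) (c : Fin 2)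
    (i j : ℤ) : ℝ :=
  (1 / (dx * dy)) * ∑' k : ℤ, ∑' l : ℤ, ρ k l * DW W dx dy c i j k l

/-- One step of the finite volume scheme (Lax–Friedrichs type update rule). -/
def fvStep (W : EuclideanSpace ℝ (Fin 2) → ℝ) (winf dx dy dt : ℝ) (ρ : ℤ → ℤ → ℝ)
    (i j : ℤ) : ℝ :=
  let ax : ℤ → ℤ → ℝ := fun i j => discVel W dx dy ρ 0 i j
  let ay : ℤ → ℤ → ℝ := fun i j => discVel W dx dy ρ 1 i j
  -- half-index quantities: `axh i j = a_x{}_{i+1/2,j}`, `ρxh i j = ρ_{i+1/2,j}`, etc.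
  let axh : ℤ → ℤ → ℝ := fun i j => (ax i j + ax (i + 1) j) / 2
  let ayh : ℤ → ℤ → ℝ := fun i j => (ay i j + ay i (j + 1)) / 2
  let ρxh : ℤ → ℤ → ℝ := fun i j => (ρ i j + ρ (i + 1) j) / 2
  let ρyh : ℤ → ℤ → ℝ := fun i j => (ρ i j + ρ i (j + 1)) / 2
  ρ i j - (dt / dx) * (axh i j * ρxh i j - axh (i - 1) j * ρxh (i - 1) j)
        - (dt / dy) * (ayh i j * ρyh i j - ayh i (j - 1) * ρyh i (j - 1))
        + (dt * winf / (2 * dx)) * (ρ (i + 1) j - 2 * ρ i j + ρ (i - 1) j)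
        + (dt * winf / (2 * dy)) * (ρ i (j + 1) - 2 * ρ i j + ρ i (j - 1))

/-- The finite volume approximation `ρ^n_{ij}`, initialized by cell averages of `ρini`. -/
def fvRho (W : EuclideanSpace ℝ (Fin 2) → ℝ) (winf dx dy dt : ℝ)
    (ρini : Measure (EuclideanSpace ℝ (Fin 2))) : ℕ → ℤ → ℤ → ℝ
  | 0 => fun i j => (ρini (cell2 dx dy i j)).toReal / (dx * dy)
  | n + 1 => fun i j => fvStep W winf dx dy dt (fvRho W winf dx dy dt ρini n) i j

/-- `μ ∈ 𝒫₂(ℝ²)`: a Borel probability measure with finite second moment. -/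
def MemP2 {d : ℕ} (μ : Measure (EuclideanSpace ℝ (Fin d))) : Prop :=
  IsProbabilityMeasure μ ∧ Integrable (fun x => ‖x‖ ^ 2) μ

-- Section A : hatGrad basics
section HatGrad
variable {W : EuclideanSpace ℝ (Fin 2) → ℝ} {winf lam : ℝ}

abbrev E2 := EuclideanSpace ℝ (Fin 2)

lemma hatGrad_odd (hW : PointyPotential 2 W winf lam) (x : E2) :
    hatGrad 2 W (-x) = - hatGrad 2 W x := by
  by_cases hx : x = 0
  · simp [hatGrad, hx]
  · have hnx : -x ≠ 0 := neg_ne_zero.mpr hx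
    simp only [hatGrad, if_neg hx, if_neg hnx]
    -- show gradient W (-x) = - gradient W x
    have hWd := (hW.diffAway (-x) hnx).hasFDerivAt
    have h2 : HasFDerivAt (fun y : E2 => W (-y))
        ((fderiv ℝ W (-x)).comp (-(ContinuousLinearMap.id ℝ E2))) x := by
      have hneg : HasFDerivAt (fun y : E2 => -y) (-(ContinuousLinearMap.id ℝ E2)) x :=
        (hasFDerivAt_id x).neg
      exact hWd.comp x hneg
    have hfun : (fun y : E2 => W (-y)) = W := funext fun y => hW.even y
    rw [hfun] at h2
    have hfd : fderiv ℝ W x = (fderiv ℝ W (-x)).comp (-(ContinuousLinearMap.id ℝ E2)) :=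
      h2.fderiv
    have hfd' : fderiv ℝ W x = -(fderiv ℝ W (-x)) := by
      rw [hfd]; ext y; simp
    show gradient W (-x) = - gradient W x
    unfold gradient
    rw [hfd', map_neg, neg_neg]

lemma hatGrad_norm_le (hW : PointyPotential 2 W winf lam) (x : E2) :
    ‖hatGrad 2 W x‖ ≤ winf := by
  by_cases hx : x = 0
  · simp [hatGrad, hx, hW.winf_nonneg]
  · simpa [hatGrad, hx] using hW.gradBound x hx

lemma hatGrad_measurable (hW : PointyPotential 2 W winf lam) :
    Measurable (hatGrad 2 W) := by
  have hs : MeasurableSet {x : E2 | x ≠ 0} :=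
    (isClosed_singleton (x := (0:E2))).measurableSet.compl
  have heq : hatGrad 2 W = Function.extend (Subtype.val : {x : E2 // x ≠ 0} → E2)
      (fun x => gradient W x.1) (fun _ => 0) := by
    funext x
    by_cases hx : x = 0
    · subst hx
      rw [Function.extend_apply' _ _ _ (by rintro ⟨⟨y, hy⟩, rfl⟩; exact hy rfl)]
      simp [hatGrad]
    · have : x = ((⟨x, hx⟩ : {x : E2 // x ≠ 0}) : E2) := rfl
      rw [this, Subtype.val_injective.extend_apply]
      simp [hatGrad, hx]
  rw [heq]
  exact (MeasurableEmbedding.subtype_coe hs).measurable_extend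
    (Continuous.measurable (continuousOn_iff_continuous_restrict.mp hW.gradContinuous))
    measurable_const

lemma abs_coord_le_norm (x : E2) (c : Fin 2) : |x c| ≤ ‖x‖ := by
  rw [EuclideanSpace.norm_eq, ← Real.sqrt_sq_eq_abs]
  apply Real.sqrt_le_sqrt
  exact Finset.single_le_sum (f := fun i => ‖x i‖ ^ 2) (fun i _ => by positivity)
    (Finset.mem_univ c) |>.trans_eq' (by rw [Real.norm_eq_abs, sq_abs])

end HatGrad
-- Section B : cells
section Cells
variable {dx dy : ℝ}

lemma measurable_coord (c : Fin 2) : Measurable fun p : E2 => p c := by measurability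

lemma measurableSet_cell2 (dx dy : ℝ) (i j : ℤ) : MeasurableSet (cell2 dx dy i j) := by
  have : cell2 dx dy i j = (fun p : E2 => p 0) ⁻¹' Set.Ico ((i:ℝ)*dx) (((i:ℝ)+1)*dx) ∩
      (fun p : E2 => p 1) ⁻¹' Set.Ico ((j:ℝ)*dy) (((j:ℝ)+1)*dy) := rfl
  rw [this]
  exact ((measurable_coord 0) measurableSet_Ico).inter ((measurable_coord 1) measurableSet_Ico)

lemma volume_cell2 (i j : ℤ) :
    volume (cell2 dx dy i j) = ENNReal.ofReal dx * ENNReal.ofReal dy := by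
  have hpre : cell2 dx dy i j = (MeasurableEquiv.toLp 2 (Fin 2 → ℝ)).symm ⁻¹'
      (Set.univ.pi ![Set.Ico ((i:ℝ)*dx) (((i:ℝ)+1)*dx), Set.Ico ((j:ℝ)*dy) (((j:ℝ)+1)*dy)]) := by
    ext p
    simp only [cell2, Set.mem_preimage, Set.mem_pi, Set.mem_univ, forall_true_left,
      Set.mem_setOf_eq]
    constructor
    · rintro ⟨h0, h1⟩ c
      fin_cases c <;> simpa using ‹_›
    · intro h
      exact ⟨by simpa using h 0, by simpa using h 1⟩
  rw [hpre, (EuclideanSpace.volume_preserving_symm_measurableEquiv_toLp (Fin 2)).measure_preimage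
    ((MeasurableSet.univ_pi (fun c : Fin 2 => by
      fin_cases c <;> exact measurableSet_Ico)).nullMeasurableSet)]
  rw [volume_pi_pi]
  rw [Fin.prod_univ_two]
  simp [Real.volume_Ico]
  congr 1 <;> ring_nf

lemma volume_cell2_lt_top (i j : ℤ) : volume (cell2 dx dy i j) < ⊤ := by
  rw [volume_cell2]; exact ENNReal.mul_lt_top ENNReal.ofReal_lt_top ENNReal.ofReal_lt_top

lemma volume_cell2_toReal (hdx : 0 < dx) (hdy : 0 < dy) (i j : ℤ) :
    (volume (cell2 dx dy i j)).toReal = dx * dy := by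
  rw [volume_cell2, ← ENNReal.ofReal_mul hdx.le, ENNReal.toReal_ofReal (by positivity)]

/-- The translation vector `(m dx, n dy)`. -/
def tvec (dx dy : ℝ) (m n : ℤ) : E2 := (WithLp.equiv 2 (Fin 2 → ℝ)).symm ![(m:ℝ)*dx, (n:ℝ)*dy]

@[simp] lemma tvec_apply0 : tvec dx dy m n 0 = (m:ℝ)*dx := rfl
@[simp] lemma tvec_apply1 : tvec dx dy m n 1 = (n:ℝ)*dy := rfl

lemma cell2_preimage_add (i j m n : ℤ) :
    (fun p : E2 => p + tvec dx dy m n) ⁻¹' cell2 dx dy (i+m) (j+n) = cell2 dx dy i j := by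
  ext p
  simp only [Set.mem_preimage, cell2, Set.mem_setOf_eq, Set.mem_Ico, PiLp.add_apply,
    tvec_apply0, tvec_apply1, Int.cast_add]
  constructor
  · rintro ⟨⟨h1, h2⟩, h3, h4⟩
    refine ⟨⟨by nlinarith, by nlinarith⟩, by nlinarith, by nlinarith⟩
  · rintro ⟨⟨h1, h2⟩, h3, h4⟩
    refine ⟨⟨by nlinarith, by nlinarith⟩, by nlinarith, by nlinarith⟩

lemma mem_cell2_iff (hdx : 0 < dx) (hdy : 0 < dy) {p : E2} {i j : ℤ} :
    p ∈ cell2 dx dy i j ↔ i = ⌊p 0 / dx⌋ ∧ j = ⌊p 1 / dy⌋ := by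
  have h : ∀ (d : ℝ), 0 < d → ∀ (k : ℤ) (t : ℝ),
      ((k:ℝ) * d ≤ t ∧ t < ((k:ℝ)+1) * d) ↔ k = ⌊t / d⌋ := by
    intro d hd k t
    rw [eq_comm, Int.floor_eq_iff, le_div_iff₀ hd, div_lt_iff₀ hd]
  exact and_congr (h dx hdx i (p 0)) (h dy hdy j (p 1))

lemma cell2_disjoint (hdx : 0 < dx) (hdy : 0 < dy) :
    Pairwise (Function.onFun Disjoint fun q : ℤ × ℤ => cell2 dx dy q.1 q.2) := by
  rintro ⟨i, j⟩ ⟨k, l⟩ hne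
  simp only [Function.onFun]
  rw [Set.disjoint_left]
  intro p hp hp'
  rw [mem_cell2_iff hdx hdy] at hp hp'
  exact hne (by ext <;> simp [hp.1, hp.2, hp'.1, hp'.2, hp.1.trans hp'.1.symm, hp.2.trans hp'.2.symm])

lemma cell2_iUnion (hdx : 0 < dx) (hdy : 0 < dy) :
    (⋃ q : ℤ × ℤ, cell2 dx dy q.1 q.2) = Set.univ := by
  ext p
  simp only [Set.mem_iUnion, Set.mem_univ, iff_true]
  exact ⟨(⌊p 0 / dx⌋, ⌊p 1 / dy⌋), (mem_cell2_iff hdx hdy).mpr ⟨rfl, rfl⟩⟩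

end Cells
-- Section C : DW facts
section DWfacts
variable {W : E2 → ℝ} {winf lam : ℝ} {dx dy : ℝ}

lemma measurable_hatGrad_pair (hW : PointyPotential 2 W winf lam) (c : Fin 2) :
    Measurable fun z : E2 × E2 => hatGrad 2 W (z.2 - z.1) c :=
  (measurable_coord c).comp ((hatGrad_measurable hW).comp (measurable_snd.sub measurable_fst))

lemma abs_hatGrad_coord_le (hW : PointyPotential 2 W winf lam) (x : E2) (c : Fin 2) :
    |hatGrad 2 W x c| ≤ winf :=
  (abs_coord_le_norm _ c).trans (hatGrad_norm_le hW x)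

lemma integrable_hatGrad_pair (hW : PointyPotential 2 W winf lam) (c : Fin 2)
    (A B : Set E2) (hA : MeasurableSet A) (hB : MeasurableSet B)
    (hAf : volume A < ⊤) (hBf : volume B < ⊤) :
    Integrable (Function.uncurry fun q p : E2 => hatGrad 2 W (p - q) c)
      ((volume.restrict A).prod (volume.restrict B)) := by
  haveI : IsFiniteMeasure (volume.restrict A) :=
    ⟨by rwa [Measure.restrict_apply_univ]⟩
  haveI : IsFiniteMeasure (volume.restrict B) :=
    ⟨by rwa [Measure.restrict_apply_univ]⟩
  refine (integrable_const winf).mono' ?_ ?_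
  · exact (measurable_hatGrad_pair hW c).aestronglyMeasurable
  · refine Eventually.of_forall fun z => ?_
    simpa [Real.norm_eq_abs, Function.uncurry] using abs_hatGrad_coord_le hW (z.2 - z.1) c

lemma integrable_hatGrad_inner (hW : PointyPotential 2 W winf lam) (c : Fin 2)
    (B : Set E2) (hB : MeasurableSet B) (hBf : volume B < ⊤) (q : E2) :
    IntegrableOn (fun p : E2 => hatGrad 2 W (p - q) c) B := by
  haveI : IsFiniteMeasure (volume.restrict B) :=
    ⟨by rwa [Measure.restrict_apply_univ]⟩
  refine (integrable_const winf).mono' ?_ ?_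
  · exact ((measurable_coord c).comp
      ((hatGrad_measurable hW).comp (measurable_id.sub measurable_const))).aestronglyMeasurable
  · exact Eventually.of_forall fun p => by
      simpa [Real.norm_eq_abs] using abs_hatGrad_coord_le hW (p - q) c

lemma integrable_hatGrad_pair' (hW : PointyPotential 2 W winf lam) (c : Fin 2)
    (A B : Set E2) (hA : MeasurableSet A) (hB : MeasurableSet B)
    (hAf : volume A < ⊤) (hBf : volume B < ⊤) :
    Integrable (Function.uncurry fun q p : E2 => hatGrad 2 W (q - p) c)
      ((volume.restrict A).prod (volume.restrict B)) := by
  haveI : IsFiniteMeasure (volume.restrict A) :=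
    ⟨by rwa [Measure.restrict_apply_univ]⟩
  haveI : IsFiniteMeasure (volume.restrict B) :=
    ⟨by rwa [Measure.restrict_apply_univ]⟩
  refine (integrable_const winf).mono' ?_ ?_
  · exact ((measurable_coord c).comp
      ((hatGrad_measurable hW).comp (measurable_fst.sub measurable_snd))).aestronglyMeasurable
  · exact Eventually.of_forall fun z => by
      simpa [Real.norm_eq_abs, Function.uncurry] using abs_hatGrad_coord_le hW (z.1 - z.2) c

lemma abs_DW_le (hW : PointyPotential 2 W winf lam) (hdx : 0 < dx) (hdy : 0 < dy)
    (c : Fin 2) (i j k l : ℤ) :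
    |DW W dx dy c i j k l| ≤ winf * (dx * dy) * (dx * dy) := by
  have hinner : ∀ q : E2, ‖∫ p in cell2 dx dy i j, hatGrad 2 W (p - q) c‖ ≤ winf * (dx * dy) := by
    intro q
    have := norm_setIntegral_le_of_norm_le_const (volume_cell2_lt_top (dx := dx) (dy := dy) i j)
      (f := fun p : E2 => hatGrad 2 W (p - q) c) (C := winf)
      (fun p _ => by simpa [Real.norm_eq_abs] using abs_hatGrad_coord_le hW (p - q) c)
    rwa [measureReal_def, volume_cell2_toReal hdx hdy] at this
  have := norm_setIntegral_le_of_norm_le_const (volume_cell2_lt_top (dx := dx) (dy := dy) k l)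
    (f := fun q : E2 => ∫ p in cell2 dx dy i j, hatGrad 2 W (p - q) c) (C := winf * (dx * dy))
    (fun q _ => hinner q)
  rw [measureReal_def, volume_cell2_toReal hdx hdy] at this
  simpa [DW, Real.norm_eq_abs, mul_assoc] using this

lemma DW_antisymm (hW : PointyPotential 2 W winf lam) (c : Fin 2) (i j k l : ℤ) :
    DW W dx dy c k l i j = - DW W dx dy c i j k l := by
  unfold DW
  have step1 : ∀ q : E2, (∫ p in cell2 dx dy k l, hatGrad 2 W (p - q) c) =
      - ∫ p in cell2 dx dy k l, hatGrad 2 W (q - p) c := by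
    intro q
    rw [← integral_neg]
    refine integral_congr_ae (Eventually.of_forall fun p => ?_)
    show hatGrad 2 W (p - q) c = -hatGrad 2 W (q - p) c
    have h : p - q = -(q - p) := by abel
    rw [h, hatGrad_odd hW]
    simp
  calc (∫ q in cell2 dx dy i j, ∫ p in cell2 dx dy k l, hatGrad 2 W (p - q) c)
      = ∫ q in cell2 dx dy i j, - ∫ p in cell2 dx dy k l, hatGrad 2 W (q - p) c :=
        integral_congr_ae (Eventually.of_forall step1)
    _ = - ∫ q in cell2 dx dy i j, ∫ p in cell2 dx dy k l, hatGrad 2 W (q - p) c :=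
        integral_neg _
    _ = - ∫ p in cell2 dx dy k l, ∫ q in cell2 dx dy i j, hatGrad 2 W (q - p) c := by
        congr 1
        exact integral_integral_swap (integrable_hatGrad_pair' hW c _ _
          (measurableSet_cell2 dx dy i j) (measurableSet_cell2 dx dy k l)
          (volume_cell2_lt_top i j) (volume_cell2_lt_top k l))

lemma DW_translate (hW : PointyPotential 2 W winf lam) (c : Fin 2) (i j k l m n : ℤ) :
    DW W dx dy c (i + m) (j + n) (k + m) (l + n) = DW W dx dy c i j k l := by
  unfold DW
  have hmp := measurePreserving_add_right (volume : Measure E2) (tvec dx dy m n)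
  have hemb : MeasurableEmbedding (· + tvec dx dy m n) :=
    (MeasurableEquiv.addRight (tvec dx dy m n)).measurableEmbedding
  have hinner : ∀ q : E2, (∫ p in cell2 dx dy (i+m) (j+n), hatGrad 2 W (p - q) c) =
      ∫ p in cell2 dx dy i j, hatGrad 2 W (p + tvec dx dy m n - q) c := by
    intro q
    rw [← hmp.setIntegral_preimage_emb hemb (fun p => hatGrad 2 W (p - q) c)
      (cell2 dx dy (i+m) (j+n)), cell2_preimage_add]
  calc (∫ q in cell2 dx dy (k+m) (l+n), ∫ p in cell2 dx dy (i+m) (j+n), hatGrad 2 W (p - q) c)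
      = ∫ q in cell2 dx dy (k+m) (l+n), ∫ p in cell2 dx dy i j, hatGrad 2 W (p + tvec dx dy m n - q) c :=
        integral_congr_ae (Eventually.of_forall hinner)
    _ = ∫ q in cell2 dx dy k l, ∫ p in cell2 dx dy i j, hatGrad 2 W (p + tvec dx dy m n - (q + tvec dx dy m n)) c := by
        rw [← hmp.setIntegral_preimage_emb hemb
          (fun q => ∫ p in cell2 dx dy i j, hatGrad 2 W (p + tvec dx dy m n - q) c)
          (cell2 dx dy (k+m) (l+n)), cell2_preimage_add]
    _ = ∫ q in cell2 dx dy k l, ∫ p in cell2 dx dy i j, hatGrad 2 W (p - q) c := by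
        refine integral_congr_ae (Eventually.of_forall fun q => ?_)
        refine integral_congr_ae (Eventually.of_forall fun p => ?_)
        congr 1
        abel_nf

end DWfacts
-- Section D : abstract summation lemmas
section Key

lemma tsum_eq_zero_of_antisymm {β : Type*} {f : β → ℝ} (hf : Summable f) (σ : β ≃ β)
    (h : ∀ z, f (σ z) = - f z) : ∑' z, f z = 0 := by
  have h1 : ∑' z, f (σ z) = ∑' z, f z := σ.tsum_eq f
  have h2 : ∑' z, f (σ z) = - ∑' z, f z := by
    calc ∑' z, f (σ z) = ∑' z, -f z := tsum_congr h
    _ = - ∑' z, f z := tsum_neg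
  linarith

lemma abs_mul3_le {u B v S T : ℝ} (hu : |u| ≤ S) (hv : |v| ≤ T) :
    |u * B * v| ≤ S * |B| * T := by
  rw [abs_mul, abs_mul]
  have h0 : (0:ℝ) ≤ |u| := abs_nonneg u
  have h1 : (0:ℝ) ≤ |B| := abs_nonneg B
  have h2 : (0:ℝ) ≤ |v| := abs_nonneg v
  have hS : (0:ℝ) ≤ S := h0.trans hu
  exact mul_le_mul (mul_le_mul_of_nonneg_right hu h1) hv h2 (by positivity)

variable {r : ℤ × ℤ → ℝ} {d : ℤ × ℤ → ℤ × ℤ → ℝ} {C : ℝ}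

lemma key_flux_zero (hr : Summable fun p => |r p|)
    (hC : ∀ p q, |d p q| ≤ C)
    (hanti : ∀ p q, d q p = - d p q)
    (e : ℤ × ℤ) (htr : ∀ p q, d (p + e) (q + e) = d p q) :
    ∑' p, ((∑' q, r q * d p q) + ∑' q, r q * d (p + e) q) * (r p + r (p + e)) = 0 := by
  have hC0 : 0 ≤ C := (abs_nonneg _).trans (hC 0 0)
  have hre : ∀ a : ℤ × ℤ, Summable fun p => |r (p + a)| :=
    fun a => hr.comp_injective (add_left_injective a)
  have hdom : Summable fun z : (ℤ×ℤ) × (ℤ×ℤ) =>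
      (|r z.1| + |r (z.1 + e)|) * |r z.2| * (2*C) :=
    ((hr.add (hre e)).mul_of_nonneg hr
      (fun p => by positivity) (fun p => abs_nonneg _)).mul_right _
  have hmm : ∀ f : (ℤ×ℤ) × (ℤ×ℤ) → ℝ,
      (∀ z, |f z| ≤ (|r z.1| + |r (z.1 + e)|) * |r z.2| * (2*C)) → Summable f :=
    fun f hf => Summable.of_norm_bounded hdom fun z => by
      rw [Real.norm_eq_abs]; exact hf z
  have hu1 : ∀ z : (ℤ×ℤ) × (ℤ×ℤ), |r z.1| ≤ |r z.1| + |r (z.1 + e)| :=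
    fun z => le_add_of_nonneg_right (abs_nonneg _)
  have hu2 : ∀ z : (ℤ×ℤ) × (ℤ×ℤ), |r (z.1 + e)| ≤ |r z.1| + |r (z.1 + e)| :=
    fun z => le_add_of_nonneg_left (abs_nonneg _)
  have hv1 : ∀ p q : ℤ×ℤ, |d p q| ≤ 2*C := fun p q => (hC p q).trans (by linarith)
  -- the four pieces
  have h1 : Summable fun z : (ℤ×ℤ) × (ℤ×ℤ) => r z.1 * r z.2 * d z.1 z.2 :=
    hmm _ fun z => abs_mul3_le (hu1 z) (hv1 z.1 z.2)
  have h2 : Summable fun z : (ℤ×ℤ) × (ℤ×ℤ) => r z.1 * r z.2 * d (z.1 + e) z.2 :=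
    hmm _ fun z => abs_mul3_le (hu1 z) (hv1 (z.1 + e) z.2)
  have h3 : Summable fun z : (ℤ×ℤ) × (ℤ×ℤ) => r (z.1 + e) * r z.2 * d z.1 z.2 :=
    hmm _ fun z => abs_mul3_le (hu2 z) (hv1 z.1 z.2)
  have h4 : Summable fun z : (ℤ×ℤ) × (ℤ×ℤ) => r (z.1 + e) * r z.2 * d (z.1 + e) z.2 :=
    hmm _ fun z => abs_mul3_le (hu2 z) (hv1 (z.1 + e) z.2)
  have h3' : Summable fun z : (ℤ×ℤ) × (ℤ×ℤ) => r z.1 * r z.2 * d (z.1 + -e) z.2 :=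
    hmm _ fun z => abs_mul3_le (hu1 z) (hv1 (z.1 + -e) z.2)
  have hG : Summable fun z : (ℤ×ℤ) × (ℤ×ℤ) =>
      (r z.1 + r (z.1 + e)) * r z.2 * (d z.1 z.2 + d (z.1 + e) z.2) :=
    hmm _ fun z => abs_mul3_le (abs_add_le _ _)
      ((abs_add_le _ _).trans (by have := hC z.1 z.2; have := hC (z.1+e) z.2; linarith))
  -- summability of the inner q-sums
  have hq : ∀ p : ℤ × ℤ, Summable fun q => r q * d p q := by
    intro p
    refine Summable.of_norm_bounded (hr.mul_right C) fun q => ?_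
    rw [Real.norm_eq_abs, abs_mul]
    exact mul_le_mul_of_nonneg_left (hC p q) (abs_nonneg _)
  -- LHS equals the sum over the product
  have hLHS : ∑' p, ((∑' q, r q * d p q) + ∑' q, r q * d (p + e) q) * (r p + r (p + e)) =
      ∑' z : (ℤ×ℤ) × (ℤ×ℤ), (r z.1 + r (z.1 + e)) * r z.2 * (d z.1 z.2 + d (z.1 + e) z.2) := by
    rw [Summable.tsum_prod' hG fun p => by
      have heq : (fun q => (r p + r (p + e)) * r q * (d p q + d (p + e) q)) =
          fun q => ((r q * d p q) + (r q * d (p + e) q)) * (r p + r (p + e)) := by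
        funext q; ring
      exact heq ▸ ((hq p).add (hq (p + e))).mul_right _]
    refine tsum_congr fun p => ?_
    rw [← Summable.tsum_add (hq p) (hq (p + e)), ← tsum_mul_right]
    refine tsum_congr fun q => ?_
    ring
  rw [hLHS]
  -- split into four sums
  have hsplit : ∑' z : (ℤ×ℤ) × (ℤ×ℤ), (r z.1 + r (z.1 + e)) * r z.2 * (d z.1 z.2 + d (z.1 + e) z.2)
      = (∑' z : (ℤ×ℤ) × (ℤ×ℤ), r z.1 * r z.2 * d z.1 z.2)
      + ((∑' z : (ℤ×ℤ) × (ℤ×ℤ), r z.1 * r z.2 * d (z.1 + e) z.2)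
        + ((∑' z : (ℤ×ℤ) × (ℤ×ℤ), r (z.1 + e) * r z.2 * d z.1 z.2)
          + (∑' z : (ℤ×ℤ) × (ℤ×ℤ), r (z.1 + e) * r z.2 * d (z.1 + e) z.2))) := by
    rw [← Summable.tsum_add h3 h4, ← Summable.tsum_add h2 (h3.add h4), ← Summable.tsum_add h1 (h2.add (h3.add h4))]
    exact tsum_congr fun z => by ring
  rw [hsplit]
  -- term 1 vanishes by antisymmetry
  have hA1 : (∑' z : (ℤ×ℤ) × (ℤ×ℤ), r z.1 * r z.2 * d z.1 z.2) = 0 := by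
    refine tsum_eq_zero_of_antisymm h1 (Equiv.prodComm _ _) fun z => ?_
    simp only [Equiv.prodComm_apply, Prod.fst_swap, Prod.snd_swap]
    rw [hanti z.1 z.2]; ring
  -- term 4 equals term 1
  have hA4 : (∑' z : (ℤ×ℤ) × (ℤ×ℤ), r (z.1 + e) * r z.2 * d (z.1 + e) z.2) = 0 := by
    have h := ((Equiv.addRight e).prodCongr (Equiv.refl (ℤ×ℤ))).tsum_eq
      (fun z : (ℤ×ℤ) × (ℤ×ℤ) => r z.1 * r z.2 * d z.1 z.2)
    rw [← hA1, ← h]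
    exact tsum_congr fun z => by simp
  -- term 3 reindexed
  have hA3 : (∑' z : (ℤ×ℤ) × (ℤ×ℤ), r (z.1 + e) * r z.2 * d z.1 z.2)
      = ∑' z : (ℤ×ℤ) × (ℤ×ℤ), r z.1 * r z.2 * d (z.1 + -e) z.2 := by
    have h := ((Equiv.addRight (-e)).prodCongr (Equiv.refl (ℤ×ℤ))).tsum_eq
      (fun z : (ℤ×ℤ) × (ℤ×ℤ) => r (z.1 + e) * r z.2 * d z.1 z.2)
    rw [← h]
    exact tsum_congr fun z => by simp [neg_add_cancel_right]
  have hA23 : (∑' z : (ℤ×ℤ) × (ℤ×ℤ), r z.1 * r z.2 * d (z.1 + e) z.2)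
      + (∑' z : (ℤ×ℤ) × (ℤ×ℤ), r z.1 * r z.2 * d (z.1 + -e) z.2) = 0 := by
    rw [← Summable.tsum_add h2 h3']
    refine tsum_eq_zero_of_antisymm (by
      refine hmm _ fun z => ?_
      calc |r z.1 * r z.2 * d (z.1 + e) z.2 + r z.1 * r z.2 * d (z.1 + -e) z.2|
          = |r z.1 * r z.2 * (d (z.1 + e) z.2 + d (z.1 + -e) z.2)| := by ring_nf
        _ ≤ (|r z.1| + |r (z.1 + e)|) * |r z.2| * (2*C) :=
            abs_mul3_le (hu1 z) ((abs_add_le _ _).trans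
              (by have := hC (z.1+e) z.2; have := hC (z.1+-e) z.2; linarith)))
      (Equiv.prodComm _ _) fun z => ?_
    simp only [Equiv.prodComm_apply, Prod.fst_swap, Prod.snd_swap]
    have k1 : d (z.2 + e) z.1 = - d (z.1 + -e) z.2 := by
      rw [hanti]
      have h : d z.1 (z.2 + e) = d (z.1 + -e) z.2 := by
        rw [← htr (z.1 + -e) z.2, neg_add_cancel_right]
      rw [h]
    have k2 : d (z.2 + -e) z.1 = - d (z.1 + e) z.2 := by
      rw [hanti]
      have h : d z.1 (z.2 + -e) = d (z.1 + e) z.2 := by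
        rw [← htr z.1 (z.2 + -e), neg_add_cancel_right]
      rw [h]
    rw [k1, k2]; ring
  rw [hA1, hA4, hA3]
  linarith [hA23]

end Key
-- Section E : scheme-level lemmas
section Scheme
variable {W : E2 → ℝ} {winf lam dx dy dt : ℝ}

/-- The `DW` kernel as a function of cell pairs. -/
def dker (W : E2 → ℝ) (dx dy : ℝ) (c : Fin 2) (p q : ℤ × ℤ) : ℝ :=
  DW W dx dy c p.1 p.2 q.1 q.2

lemma dker_abs_le (hW : PointyPotential 2 W winf lam) (hdx : 0 < dx) (hdy : 0 < dy)
    (c : Fin 2) (p q : ℤ × ℤ) : |dker W dx dy c p q| ≤ winf * (dx*dy) * (dx*dy) :=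
  abs_DW_le hW hdx hdy c p.1 p.2 q.1 q.2

lemma dker_antisymm (hW : PointyPotential 2 W winf lam) (c : Fin 2) (p q : ℤ × ℤ) :
    dker W dx dy c q p = - dker W dx dy c p q :=
  DW_antisymm hW c p.1 p.2 q.1 q.2

lemma dker_translate (hW : PointyPotential 2 W winf lam) (c : Fin 2) (e p q : ℤ × ℤ) :
    dker W dx dy c (p + e) (q + e) = dker W dx dy c p q := by
  unfold dker
  have := DW_translate (dx := dx) (dy := dy) hW c p.1 p.2 q.1 q.2 e.1 e.2
  simpa using this

variable {ρ : ℤ → ℤ → ℝ}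

lemma discVel_eq (hW : PointyPotential 2 W winf lam) (hdx : 0 < dx) (hdy : 0 < dy)
    (h0 : Summable fun p : ℤ × ℤ => |ρ p.1 p.2|) (c : Fin 2) (i j : ℤ) :
    discVel W dx dy ρ c i j =
      (1 / (dx * dy)) * ∑' q : ℤ × ℤ, ρ q.1 q.2 * dker W dx dy c (i, j) q := by
  unfold discVel
  congr 1
  have hsum : Summable fun q : ℤ × ℤ => ρ q.1 q.2 * dker W dx dy c (i, j) q := by
    refine Summable.of_norm_bounded (h0.mul_right (winf * (dx*dy) * (dx*dy))) fun q => ?_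
    rw [Real.norm_eq_abs, abs_mul]
    exact mul_le_mul_of_nonneg_left (dker_abs_le hW hdx hdy c _ q) (abs_nonneg _)
  rw [Summable.tsum_prod' hsum fun k => hsum.prod_factor k]
  rfl

lemma summable_q (hW : PointyPotential 2 W winf lam) (hdx : 0 < dx) (hdy : 0 < dy)
    (h0 : Summable fun p : ℤ × ℤ => |ρ p.1 p.2|) (c : Fin 2) (p : ℤ × ℤ) :
    Summable fun q : ℤ × ℤ => ρ q.1 q.2 * dker W dx dy c p q := by
  refine Summable.of_norm_bounded (h0.mul_right (winf * (dx*dy) * (dx*dy))) fun q => ?_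
  rw [Real.norm_eq_abs, abs_mul]
  exact mul_le_mul_of_nonneg_left (dker_abs_le hW hdx hdy c _ q) (abs_nonneg _)

lemma abs_discVel_le (hW : PointyPotential 2 W winf lam) (hdx : 0 < dx) (hdy : 0 < dy)
    (h0 : Summable fun p : ℤ × ℤ => |ρ p.1 p.2|) (c : Fin 2) (i j : ℤ) :
    |discVel W dx dy ρ c i j| ≤
      (1 / (dx * dy)) * ((winf * (dx*dy) * (dx*dy)) * ∑' p : ℤ × ℤ, |ρ p.1 p.2|) := by
  rw [discVel_eq hW hdx hdy h0 c i j, abs_mul]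
  have h1 : |1 / (dx * dy)| = 1 / (dx * dy) := abs_of_pos (by positivity)
  rw [h1]
  refine mul_le_mul_of_nonneg_left ?_ (by positivity)
  calc |∑' q : ℤ × ℤ, ρ q.1 q.2 * dker W dx dy c (i, j) q|
      ≤ ∑' q : ℤ × ℤ, ‖ρ q.1 q.2 * dker W dx dy c (i, j) q‖ := by
        simpa [Real.norm_eq_abs] using
          norm_tsum_le_tsum_norm ((summable_q hW hdx hdy h0 c (i, j)).norm)
    _ ≤ ∑' q : ℤ × ℤ, |ρ q.1 q.2| * (winf * (dx*dy) * (dx*dy)) := by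
        refine Summable.tsum_le_tsum (fun q => ?_) ((summable_q hW hdx hdy h0 c (i, j)).norm)
          (h0.mul_right _)
        rw [Real.norm_eq_abs, abs_mul]
        exact mul_le_mul_of_nonneg_left (dker_abs_le hW hdx hdy c _ q) (abs_nonneg _)
    _ = (winf * (dx*dy) * (dx*dy)) * ∑' p : ℤ × ℤ, |ρ p.1 p.2| := by
        rw [tsum_mul_right, mul_comm]

lemma flux_sum_zero (hW : PointyPotential 2 W winf lam) (hdx : 0 < dx) (hdy : 0 < dy)
    (h0 : Summable fun p : ℤ × ℤ => |ρ p.1 p.2|) (c : Fin 2) (e : ℤ × ℤ) :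
    ∑' p : ℤ × ℤ,
      ((discVel W dx dy ρ c p.1 p.2 + discVel W dx dy ρ c (p + e).1 (p + e).2) / 2) *
      ((ρ p.1 p.2 + ρ (p + e).1 (p + e).2) / 2) = 0 := by
  have hkey := key_flux_zero (r := fun p : ℤ × ℤ => ρ p.1 p.2)
    (d := dker W dx dy c) (C := winf * (dx*dy) * (dx*dy)) h0
    (fun p q => dker_abs_le hW hdx hdy c p q)
    (fun p q => dker_antisymm hW c p q) e
    (fun p q => dker_translate hW c e p q)
  have hterm : ∀ p : ℤ × ℤ,
      ((discVel W dx dy ρ c p.1 p.2 + discVel W dx dy ρ c (p + e).1 (p + e).2) / 2) *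
      ((ρ p.1 p.2 + ρ (p + e).1 (p + e).2) / 2) =
      (1 / (dx * dy) / 4) *
        (((∑' q : ℤ × ℤ, ρ q.1 q.2 * dker W dx dy c p q) +
          ∑' q : ℤ × ℤ, ρ q.1 q.2 * dker W dx dy c (p + e) q) *
         (ρ p.1 p.2 + ρ (p + e).1 (p + e).2)) := by
    intro p
    rw [discVel_eq hW hdx hdy h0 c p.1 p.2, discVel_eq hW hdx hdy h0 c (p + e).1 (p + e).2]
    ring
  calc ∑' p : ℤ × ℤ, ((discVel W dx dy ρ c p.1 p.2 + discVel W dx dy ρ c (p + e).1 (p + e).2) / 2) *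
      ((ρ p.1 p.2 + ρ (p + e).1 (p + e).2) / 2)
      = ∑' p : ℤ × ℤ, (1 / (dx * dy) / 4) *
        (((∑' q : ℤ × ℤ, ρ q.1 q.2 * dker W dx dy c p q) +
          ∑' q : ℤ × ℤ, ρ q.1 q.2 * dker W dx dy c (p + e) q) *
         (ρ p.1 p.2 + ρ (p + e).1 (p + e).2)) := tsum_congr hterm
    _ = (1 / (dx * dy) / 4) * ∑' p : ℤ × ℤ,
        (((∑' q : ℤ × ℤ, ρ q.1 q.2 * dker W dx dy c p q) +
          ∑' q : ℤ × ℤ, ρ q.1 q.2 * dker W dx dy c (p + e) q) *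
         (ρ p.1 p.2 + ρ (p + e).1 (p + e).2)) := tsum_mul_left
    _ = 0 := by rw [hkey, mul_zero]

end Scheme
-- Section F : the update rule, rewritten
section StepEq
variable (W : E2 → ℝ) (winf dx dy dt : ℝ) (ρ : ℤ → ℤ → ℝ)

/-- The numerical flux through a cell interface in direction `e`. -/
def flux (c : Fin 2) (e : ℤ × ℤ) (p : ℤ × ℤ) : ℝ :=
  ((discVel W dx dy ρ c p.1 p.2 + discVel W dx dy ρ c (p + e).1 (p + e).2) / 2) *
    ((ρ p.1 p.2 + ρ (p + e).1 (p + e).2) / 2)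

lemma fvStep_eq (p : ℤ × ℤ) :
    fvStep W winf dx dy dt ρ p.1 p.2 =
      ρ p.1 p.2
      - (dt/dx) * (flux W dx dy ρ 0 (1,0) p - flux W dx dy ρ 0 (1,0) (p + (-1,0)))
      - (dt/dy) * (flux W dx dy ρ 1 (0,1) p - flux W dx dy ρ 1 (0,1) (p + (0,-1)))
      + (dt*winf/(2*dx)) * (ρ (p+(1,0)).1 (p+(1,0)).2 - 2*ρ p.1 p.2 + ρ (p+(-1,0)).1 (p+(-1,0)).2)
      + (dt*winf/(2*dy)) * (ρ (p+(0,1)).1 (p+(0,1)).2 - 2*ρ p.1 p.2 + ρ (p+(0,-1)).1 (p+(0,-1)).2) := by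
  obtain ⟨i, j⟩ := p
  simp only [fvStep, flux, Prod.mk_add_mk, add_zero, sub_eq_add_neg]
end StepEq
-- Section G : one-step conservation with general affine weight
section StepW
variable {W : E2 → ℝ} {winf lam dx dy dt : ℝ} {ρ : ℤ → ℤ → ℝ}

lemma step_weighted (dt : ℝ) (hW : PointyPotential 2 W winf lam) (hdx : 0 < dx) (hdy : 0 < dy)
    (h0 : Summable fun p : ℤ × ℤ => |ρ p.1 p.2|)
    (hN : Summable fun p : ℤ × ℤ => (1 + |(p.1:ℝ)| + |(p.2:ℝ)|) * |ρ p.1 p.2|)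
    (w : ℤ × ℤ → ℝ) (α β : ℝ)
    (hwb : ∀ p : ℤ × ℤ, |w p| ≤ 1 + |(p.1:ℝ)| + |(p.2:ℝ)|)
    (hws : ∀ (p e : ℤ × ℤ), w (p + e) = w p + α * e.1 + β * e.2) :
    Summable (fun p : ℤ × ℤ => w p * fvStep W winf dx dy dt ρ p.1 p.2) ∧
    ∑' p : ℤ × ℤ, w p * fvStep W winf dx dy dt ρ p.1 p.2 = ∑' p : ℤ × ℤ, w p * ρ p.1 p.2 := by
  classical
  set N : ℤ × ℤ → ℝ := fun p => 1 + |(p.1:ℝ)| + |(p.2:ℝ)| with hNdef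
  set r : ℤ × ℤ → ℝ := fun p => ρ p.1 p.2 with hrdef
  set A : ℝ := (1 / (dx * dy)) * ((winf * (dx*dy) * (dx*dy)) * ∑' p : ℤ × ℤ, |ρ p.1 p.2|)
    with hAdef
  have hA : ∀ (c : Fin 2) (p : ℤ × ℤ), |discVel W dx dy ρ c p.1 p.2| ≤ A :=
    fun c p => abs_discVel_le hW hdx hdy h0 c p.1 p.2
  have hA0 : 0 ≤ A := (abs_nonneg _).trans (hA 0 (0, 0))
  have hNpos : ∀ p : ℤ × ℤ, 0 ≤ N p := fun p => by positivity
  have hone : ∀ p : ℤ × ℤ, (1:ℝ) ≤ N p := fun p => by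
    simp only [hNdef]; linarith [abs_nonneg ((p.1:ℝ)), abs_nonneg ((p.2:ℝ))]
  -- shifted summabilities
  have habs_shift : ∀ e : ℤ × ℤ, Summable fun p : ℤ × ℤ => |r (p + e)| :=
    fun e => h0.comp_injective (add_left_injective e)
  have hNs : ∀ e : ℤ × ℤ, Summable fun p : ℤ × ℤ => N p * |r (p + e)| := by
    intro e
    have hbase : Summable fun p : ℤ × ℤ => N (p + -e) * |r p| := by
      refine Summable.of_nonneg_of_le (fun p => mul_nonneg (hNpos _) (abs_nonneg _))
        (fun p => ?_) (hN.add (h0.mul_left (|(e.1:ℝ)| + |(e.2:ℝ)|)))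
      have hb : N (p + -e) ≤ N p + (|(e.1:ℝ)| + |(e.2:ℝ)|) := by
        simp only [hNdef, Prod.fst_add, Prod.snd_add, Prod.fst_neg, Prod.snd_neg]
        push_cast
        have b1 : |(p.1:ℝ) + -(e.1:ℝ)| ≤ |(p.1:ℝ)| + |(e.1:ℝ)| := (abs_add_le _ _).trans (by
          simp [abs_neg])
        have b2 : |(p.2:ℝ) + -(e.2:ℝ)| ≤ |(p.2:ℝ)| + |(e.2:ℝ)| := (abs_add_le _ _).trans (by
          simp [abs_neg])
        linarith
      calc N (p + -e) * |r p| ≤ (N p + (|(e.1:ℝ)| + |(e.2:ℝ)|)) * |r p| :=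
            mul_le_mul_of_nonneg_right hb (abs_nonneg _)
        _ = N p * |r p| + (|(e.1:ℝ)| + |(e.2:ℝ)|) * |r p| := by ring
    have hcomp := hbase.comp_injective (add_left_injective e)
    refine hcomp.congr fun p => ?_
    show N (p + e + -e) * |r (p + e)| = N p * |r (p + e)|
    rw [add_neg_cancel_right]
  -- pointwise flux bound
  have hfluxb : ∀ (c : Fin 2) (e q : ℤ × ℤ),
      |flux W dx dy ρ c e q| ≤ A * (|r q| + |r (q + e)|) := by
    intro c e q
    unfold flux
    rw [abs_mul]
    have b1 : |(discVel W dx dy ρ c q.1 q.2 + discVel W dx dy ρ c (q+e).1 (q+e).2) / 2| ≤ A := by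
      rw [abs_div]
      have := abs_add_le (discVel W dx dy ρ c q.1 q.2) (discVel W dx dy ρ c (q+e).1 (q+e).2)
      have h1 := hA c q; have h2 := hA c (q + e)
      rw [abs_of_pos (by norm_num : (0:ℝ) < 2)]
      linarith
    have b2 : |(ρ q.1 q.2 + ρ (q+e).1 (q+e).2) / 2| ≤ |r q| + |r (q + e)| := by
      rw [abs_div, abs_of_pos (by norm_num : (0:ℝ) < 2)]
      have := abs_add_le (ρ q.1 q.2) (ρ (q+e).1 (q+e).2)
      have h1 := abs_nonneg (ρ q.1 q.2); have h2 := abs_nonneg (ρ (q+e).1 (q+e).2)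
      simp only [hrdef]
      linarith
    exact mul_le_mul b1 b2 (abs_nonneg _) hA0
  -- summabilities
  have hr : Summable r := summable_abs_iff.mp h0
  have hrsh : ∀ e : ℤ × ℤ, Summable fun p : ℤ × ℤ => r (p + e) :=
    fun e => summable_abs_iff.mp (habs_shift e)
  have hflux : ∀ (c : Fin 2) (e : ℤ × ℤ), Summable (flux W dx dy ρ c e) := by
    intro c e
    refine Summable.of_norm_bounded ((h0.add (habs_shift e)).mul_left A) fun q => ?_
    rw [Real.norm_eq_abs]
    exact (hfluxb c e q).trans_eq (by ring)
  have hwr_sh : ∀ e : ℤ × ℤ, Summable fun p : ℤ × ℤ => w p * r (p + e) := by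
    intro e
    refine Summable.of_norm_bounded (hNs e) fun p => ?_
    rw [Real.norm_eq_abs, abs_mul]
    exact mul_le_mul_of_nonneg_right (hwb p) (abs_nonneg _)
  have hwr : Summable fun p : ℤ × ℤ => w p * r p := by
    have := hwr_sh 0
    simpa using this
  have hwflux_sh : ∀ (c : Fin 2) (e e' : ℤ × ℤ),
      Summable fun p : ℤ × ℤ => w p * flux W dx dy ρ c e (p + e') := by
    intro c e e'
    refine Summable.of_norm_bounded (((hNs e').add (hNs (e' + e))).mul_left A) fun p => ?_
    rw [Real.norm_eq_abs, abs_mul]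
    calc |w p| * |flux W dx dy ρ c e (p + e')| ≤ N p * (A * (|r (p + e')| + |r (p + e' + e)|)) :=
          mul_le_mul (hwb p) (hfluxb c e (p + e')) (abs_nonneg _) (hNpos p)
      _ = A * (N p * |r (p + e')| + N p * |r (p + (e' + e))|) := by rw [← add_assoc]; ring
  have hwflux : ∀ (c : Fin 2) (e : ℤ × ℤ),
      Summable fun p : ℤ × ℤ => w p * flux W dx dy ρ c e p := by
    intro c e
    have := hwflux_sh c e 0
    simpa using this
  -- the shifted weighted tsum identity
  have hshift : ∀ g : ℤ × ℤ → ℝ, Summable g → (Summable fun p => w p * g p) →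
      ∀ e' : ℤ × ℤ, (Summable fun p : ℤ × ℤ => w p * g (p + e')) ∧
        ∑' p : ℤ × ℤ, w p * g (p + e') =
          (∑' p : ℤ × ℤ, w p * g p) - (α * e'.1 + β * e'.2) * ∑' p : ℤ × ℤ, g p := by
    intro g hg hwg e'
    have hf : Summable fun q : ℤ × ℤ => (w q - (α * e'.1 + β * e'.2)) * g q := by
      have heq : (fun q : ℤ × ℤ => (w q - (α * e'.1 + β * e'.2)) * g q) =
          fun q => w q * g q - (α * e'.1 + β * e'.2) * g q := funext fun q => by ring
      rw [heq]; exact hwg.sub (hg.mul_left _)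
    have hptw : ∀ p : ℤ × ℤ, (w (p + e') - (α * e'.1 + β * e'.2)) * g (p + e') =
        w p * g (p + e') := fun p => by rw [hws p e']; ring
    constructor
    · exact (hf.comp_injective (add_left_injective e')).congr fun p => hptw p
    · calc ∑' p : ℤ × ℤ, w p * g (p + e')
          = ∑' p : ℤ × ℤ, (w (p + e') - (α * e'.1 + β * e'.2)) * g (p + e') :=
            tsum_congr fun p => (hptw p).symm
        _ = ∑' q : ℤ × ℤ, (w q - (α * e'.1 + β * e'.2)) * g q := by
            rw [← (Equiv.addRight e').tsum_eq
              (fun q : ℤ × ℤ => (w q - (α * (e'.1:ℝ) + β * (e'.2:ℝ))) * g q)]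
            exact tsum_congr fun p => by simp
        _ = ∑' q : ℤ × ℤ, (w q * g q - (α * e'.1 + β * e'.2) * g q) :=
            tsum_congr fun q => by ring
        _ = (∑' p : ℤ × ℤ, w p * g p) - (α * e'.1 + β * e'.2) * ∑' p : ℤ × ℤ, g p := by
            rw [Summable.tsum_sub hwg (hg.mul_left _), tsum_mul_left]
  -- name the five pieces
  set f1 : ℤ × ℤ → ℝ := fun p => w p * r p with hf1
  set f2 : ℤ × ℤ → ℝ := fun p =>
    w p * flux W dx dy ρ 0 (1,0) p - w p * flux W dx dy ρ 0 (1,0) (p + (-1,0)) with hf2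
  set f3 : ℤ × ℤ → ℝ := fun p =>
    w p * flux W dx dy ρ 1 (0,1) p - w p * flux W dx dy ρ 1 (0,1) (p + (0,-1)) with hf3
  set f4 : ℤ × ℤ → ℝ := fun p =>
    w p * r (p + (1,0)) - 2 * (w p * r p) + w p * r (p + (-1,0)) with hf4
  set f5 : ℤ × ℤ → ℝ := fun p =>
    w p * r (p + (0,1)) - 2 * (w p * r p) + w p * r (p + (0,-1)) with hf5
  have hS2 : Summable f2 := (hwflux 0 (1,0)).sub ((hshift _ (hflux 0 (1,0)) (hwflux 0 (1,0)) (-1,0)).1)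
  have hS3 : Summable f3 := (hwflux 1 (0,1)).sub ((hshift _ (hflux 1 (0,1)) (hwflux 1 (0,1)) (0,-1)).1)
  have hS4 : Summable f4 := ((hwr_sh (1,0)).sub (hwr.mul_left 2)).add (hwr_sh (-1,0))
  have hS5 : Summable f5 := ((hwr_sh (0,1)).sub (hwr.mul_left 2)).add (hwr_sh (0,-1))
  -- the decomposition of the weighted update
  have hexp : ∀ p : ℤ × ℤ, w p * fvStep W winf dx dy dt ρ p.1 p.2 =
      f1 p + (-(dt/dx)) * f2 p + (-(dt/dy)) * f3 p
        + (dt*winf/(2*dx)) * f4 p + (dt*winf/(2*dy)) * f5 p := by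
    intro p
    rw [fvStep_eq W winf dx dy dt ρ p]
    simp only [hf1, hf2, hf3, hf4, hf5, hrdef]
    ring
  have hsum_total : Summable (fun p : ℤ × ℤ => w p * fvStep W winf dx dy dt ρ p.1 p.2) := by
    refine Summable.congr ?_ fun p => (hexp p).symm
    exact (((hwr.add (hS2.mul_left _)).add (hS3.mul_left _)).add (hS4.mul_left _)).add
      (hS5.mul_left _)
  refine ⟨hsum_total, ?_⟩
  -- tsum of each piece
  have hT2 : ∑' p, f2 p = 0 := by
    rw [Summable.tsum_sub (hwflux 0 (1,0)) ((hshift _ (hflux 0 (1,0)) (hwflux 0 (1,0)) (-1,0)).1),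
      (hshift _ (hflux 0 (1,0)) (hwflux 0 (1,0)) (-1,0)).2,
      show ∑' p : ℤ × ℤ, flux W dx dy ρ 0 (1,0) p = 0 from flux_sum_zero hW hdx hdy h0 0 (1,0)]
    push_cast
    ring
  have hT3 : ∑' p, f3 p = 0 := by
    rw [Summable.tsum_sub (hwflux 1 (0,1)) ((hshift _ (hflux 1 (0,1)) (hwflux 1 (0,1)) (0,-1)).1),
      (hshift _ (hflux 1 (0,1)) (hwflux 1 (0,1)) (0,-1)).2,
      show ∑' p : ℤ × ℤ, flux W dx dy ρ 1 (0,1) p = 0 from flux_sum_zero hW hdx hdy h0 1 (0,1)]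
    push_cast
    ring
  have hT4 : ∑' p, f4 p = 0 := by
    rw [Summable.tsum_add ((hwr_sh (1,0)).sub (hwr.mul_left 2)) (hwr_sh (-1,0)),
      Summable.tsum_sub (hwr_sh (1,0)) (hwr.mul_left 2),
      (hshift _ hr hwr (1,0)).2, (hshift _ hr hwr (-1,0)).2, tsum_mul_left]
    push_cast
    ring
  have hT5 : ∑' p, f5 p = 0 := by
    rw [Summable.tsum_add ((hwr_sh (0,1)).sub (hwr.mul_left 2)) (hwr_sh (0,-1)),
      Summable.tsum_sub (hwr_sh (0,1)) (hwr.mul_left 2),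
      (hshift _ hr hwr (0,1)).2, (hshift _ hr hwr (0,-1)).2, tsum_mul_left]
    push_cast
    ring
  calc ∑' p : ℤ × ℤ, w p * fvStep W winf dx dy dt ρ p.1 p.2
      = ∑' p : ℤ × ℤ, (f1 p + (-(dt/dx)) * f2 p + (-(dt/dy)) * f3 p
        + (dt*winf/(2*dx)) * f4 p + (dt*winf/(2*dy)) * f5 p) := tsum_congr hexp
    _ = ∑' p, f1 p + (-(dt/dx)) * ∑' p, f2 p + (-(dt/dy)) * ∑' p, f3 p
        + (dt*winf/(2*dx)) * ∑' p, f4 p + (dt*winf/(2*dy)) * ∑' p, f5 p := by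
        rw [Summable.tsum_add (((hwr.add (hS2.mul_left _)).add (hS3.mul_left _)).add (hS4.mul_left _))
            (hS5.mul_left _),
          Summable.tsum_add ((hwr.add (hS2.mul_left _)).add (hS3.mul_left _)) (hS4.mul_left _),
          Summable.tsum_add (hwr.add (hS2.mul_left _)) (hS3.mul_left _),
          Summable.tsum_add hwr (hS2.mul_left _),
          tsum_mul_left, tsum_mul_left, tsum_mul_left, tsum_mul_left]
    _ = ∑' p : ℤ × ℤ, w p * ρ p.1 p.2 := by
        rw [hT2, hT3, hT4, hT5]
        simp [hf1, hrdef]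

end StepW
-- Section H : initial data
section Init
variable {dx dy : ℝ}

lemma init_data (ρini : Measure (EuclideanSpace ℝ (Fin 2))) (hini : MemP2 ρini)
    (hdx : 0 < dx) (hdy : 0 < dy) :
    (Summable fun p : ℤ × ℤ => (ρini (cell2 dx dy p.1 p.2)).toReal) ∧
    (∑' p : ℤ × ℤ, (ρini (cell2 dx dy p.1 p.2)).toReal = 1) ∧
    (Summable fun p : ℤ × ℤ => |(p.1:ℝ)| * (ρini (cell2 dx dy p.1 p.2)).toReal) ∧
    (Summable fun p : ℤ × ℤ => |(p.2:ℝ)| * (ρini (cell2 dx dy p.1 p.2)).toReal) := by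
  haveI hprob : IsProbabilityMeasure ρini := hini.1
  have hmeas : ∀ p : ℤ × ℤ, MeasurableSet (cell2 dx dy p.1 p.2) :=
    fun p => measurableSet_cell2 dx dy p.1 p.2
  have hdisj := cell2_disjoint (dx := dx) (dy := dy) hdx hdy
  have htot : ∑' p : ℤ × ℤ, ρini (cell2 dx dy p.1 p.2) = 1 := by
    rw [← measure_iUnion hdisj (fun p => hmeas p), cell2_iUnion hdx hdy, measure_univ]
  have hsum0 : Summable fun p : ℤ × ℤ => (ρini (cell2 dx dy p.1 p.2)).toReal :=
    ENNReal.summable_toReal (by rw [htot]; exact ENNReal.one_ne_top)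
  have htot0 : ∑' p : ℤ × ℤ, (ρini (cell2 dx dy p.1 p.2)).toReal = 1 := by
    rw [← ENNReal.tsum_toReal_eq (fun p => measure_ne_top ρini _), htot, ENNReal.toReal_one]
  -- the dominating integrable function
  set f : E2 → ℝ := fun x => |x 0| + |x 1| + dx + dy with hfdef
  have hfnonneg : ∀ x, 0 ≤ f x := fun x => by
    have := abs_nonneg (x 0); have := abs_nonneg (x 1); simp only [hfdef]; linarith
  have hfcont : Continuous f := by
    simp only [hfdef]
    fun_prop
  have hfint : Integrable f ρini := by
    have hg : Integrable (fun x : E2 => (2 + dx + dy) + 2 * ‖x‖^2) ρini :=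
      (integrable_const _).add (hini.2.const_mul 2)
    refine hg.mono hfcont.aestronglyMeasurable (Eventually.of_forall fun x => ?_)
    rw [Real.norm_eq_abs, Real.norm_eq_abs, abs_of_nonneg (hfnonneg x)]
    have hb : ∀ c : Fin 2, |x c| ≤ 1 + ‖x‖^2 := by
      intro c
      have h1 := abs_coord_le_norm x c
      have h2 : ‖x‖ ≤ 1 + ‖x‖^2 := by nlinarith [norm_nonneg x, sq_nonneg (‖x‖ - 1)]
      linarith
    have h0 := hb 0; have h1 := hb 1
    have : (0:ℝ) ≤ (2 + dx + dy) + 2 * ‖x‖^2 := by nlinarith [sq_nonneg ‖x‖]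
    rw [abs_of_nonneg this]
    simp only [hfdef]
    linarith
  have hHasSum : HasSum (fun p : ℤ × ℤ => ∫ x in cell2 dx dy p.1 p.2, f x ∂ρini)
      (∫ x in ⋃ p : ℤ × ℤ, cell2 dx dy p.1 p.2, f x ∂ρini) :=
    hasSum_integral_iUnion hmeas hdisj (by rw [cell2_iUnion hdx hdy]; exact hfint.integrableOn)
  have hSummable := hHasSum.summable
  -- coordinate moment bounds
  have hkey : ∀ (c : Fin 2) (d : ℝ), 0 < d → d ≤ dx + dy → ∀ (k : ℤ) (x : E2),
      ((k:ℝ) * d ≤ x c ∧ x c < ((k:ℝ)+1) * d) → |(k:ℝ)| * d ≤ f x := by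
    intro c d hd hdsum k x ⟨h1, h2⟩
    have ha : |(k:ℝ) * d| ≤ |x c| + d := by
      rw [abs_le]
      constructor
      · have := neg_abs_le (x c); nlinarith
      · have := le_abs_self (x c); nlinarith
    rw [abs_mul, abs_of_pos hd] at ha
    have hc2 : |x c| = |x 0| ∨ |x c| = |x 1| := by
      fin_cases c
      · exact Or.inl rfl
      · exact Or.inr rfl
    have hn0 := abs_nonneg (x 0)
    have hn1 := abs_nonneg (x 1)
    have hxc : |x c| + d ≤ f x := by
      rcases hc2 with h | h <;> rw [h] <;> simp only [hfdef] <;> linarith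
    linarith
  have hbx : ∀ p : ℤ × ℤ, |(p.1:ℝ)| * dx * (ρini (cell2 dx dy p.1 p.2)).toReal ≤
      ∫ x in cell2 dx dy p.1 p.2, f x ∂ρini := by
    intro p
    refine setIntegral_ge_of_const_le_real (hmeas p) (measure_ne_top ρini _) ?_ hfint.integrableOn
    rintro x ⟨hx0, hx1⟩
    exact hkey 0 dx hdx (by linarith) p.1 x ⟨hx0.1, hx0.2⟩
  have hby : ∀ p : ℤ × ℤ, |(p.2:ℝ)| * dy * (ρini (cell2 dx dy p.1 p.2)).toReal ≤
      ∫ x in cell2 dx dy p.1 p.2, f x ∂ρini := by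
    intro p
    refine setIntegral_ge_of_const_le_real (hmeas p) (measure_ne_top ρini _) ?_ hfint.integrableOn
    rintro x ⟨hx0, hx1⟩
    exact hkey 1 dy hdy (by linarith) p.2 x ⟨hx1.1, hx1.2⟩
  have hSx : Summable fun p : ℤ × ℤ => |(p.1:ℝ)| * dx * (ρini (cell2 dx dy p.1 p.2)).toReal :=
    Summable.of_nonneg_of_le (fun p => by positivity) hbx hSummable
  have hSy : Summable fun p : ℤ × ℤ => |(p.2:ℝ)| * dy * (ρini (cell2 dx dy p.1 p.2)).toReal :=
    Summable.of_nonneg_of_le (fun p => by positivity) hby hSummable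
  refine ⟨hsum0, htot0, (hSx.mul_left (1/dx)).congr fun p => ?_,
    (hSy.mul_left (1/dy)).congr fun p => ?_⟩
  · field_simp
  · field_simp

end Init
/-- conservation: under the CFL condition, the finite volume scheme
conserves the total mass (equal to `1`) and the center of mass, all the relevant sums
being absolutely convergent (summable). -/
theorem fv_scheme_conservation
    (W : EuclideanSpace ℝ (Fin 2) → ℝ) (winf lam : ℝ)
    (hW : PointyPotential 2 W winf lam)
    (ρini : Measure (EuclideanSpace ℝ (Fin 2))) (hini : MemP2 ρini)
    (dx dy dt : ℝ) (hdx : 0 < dx) (hdy : 0 < dy) (hdt : 0 < dt)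
    (hCFL : winf * (1 / dx + 1 / dy) * dt ≤ 1 / 2) :
    ∀ n : ℕ,
      Summable (fun p : ℤ × ℤ => fvRho W winf dx dy dt ρini n p.1 p.2 * (dx * dy)) ∧
      (∑' p : ℤ × ℤ, fvRho W winf dx dy dt ρini n p.1 p.2 * (dx * dy)) =
        (∑' p : ℤ × ℤ, fvRho W winf dx dy dt ρini 0 p.1 p.2 * (dx * dy)) ∧
      (∑' p : ℤ × ℤ, fvRho W winf dx dy dt ρini n p.1 p.2 * (dx * dy)) = 1 ∧
      Summable (fun p : ℤ × ℤ => (p.1 : ℝ) * dx * fvRho W winf dx dy dt ρini n p.1 p.2) ∧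
      (∑' p : ℤ × ℤ, (p.1 : ℝ) * dx * fvRho W winf dx dy dt ρini n p.1 p.2) =
        (∑' p : ℤ × ℤ, (p.1 : ℝ) * dx * fvRho W winf dx dy dt ρini 0 p.1 p.2) ∧
      Summable (fun p : ℤ × ℤ => (p.2 : ℝ) * dy * fvRho W winf dx dy dt ρini n p.1 p.2) ∧
      (∑' p : ℤ × ℤ, (p.2 : ℝ) * dy * fvRho W winf dx dy dt ρini n p.1 p.2) =
        (∑' p : ℤ × ℤ, (p.2 : ℝ) * dy * fvRho W winf dx dy dt ρini 0 p.1 p.2) := by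
  obtain ⟨S0, T0, SX, SY⟩ := init_data ρini hini hdx hdy
  have hfv0 : ∀ p : ℤ × ℤ, fvRho W winf dx dy dt ρini 0 p.1 p.2 =
      (ρini (cell2 dx dy p.1 p.2)).toReal / (dx * dy) := fun p => rfl
  -- the inductive invariant
  have H : ∀ n : ℕ,
      (Summable fun p : ℤ × ℤ => |fvRho W winf dx dy dt ρini n p.1 p.2|) ∧
      (Summable fun p : ℤ × ℤ => |(p.1:ℝ) * fvRho W winf dx dy dt ρini n p.1 p.2|) ∧
      (Summable fun p : ℤ × ℤ => |(p.2:ℝ) * fvRho W winf dx dy dt ρini n p.1 p.2|) ∧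
      (∑' p : ℤ × ℤ, fvRho W winf dx dy dt ρini n p.1 p.2 =
        ∑' p : ℤ × ℤ, fvRho W winf dx dy dt ρini 0 p.1 p.2) ∧
      (∑' p : ℤ × ℤ, (p.1:ℝ) * fvRho W winf dx dy dt ρini n p.1 p.2 =
        ∑' p : ℤ × ℤ, (p.1:ℝ) * fvRho W winf dx dy dt ρini 0 p.1 p.2) ∧
      (∑' p : ℤ × ℤ, (p.2:ℝ) * fvRho W winf dx dy dt ρini n p.1 p.2 =
        ∑' p : ℤ × ℤ, (p.2:ℝ) * fvRho W winf dx dy dt ρini 0 p.1 p.2) := by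
    intro n
    induction n with
    | zero =>
      refine ⟨(S0.mul_right (1/(dx*dy))).congr fun p => ?_,
        (SX.mul_right (1/(dx*dy))).congr fun p => ?_,
        (SY.mul_right (1/(dx*dy))).congr fun p => ?_, rfl, rfl, rfl⟩
      · rw [hfv0, abs_of_nonneg (by positivity)]; ring
      · rw [hfv0, abs_mul, abs_of_nonneg
          (show (0:ℝ) ≤ (ρini (cell2 dx dy p.1 p.2)).toReal / (dx*dy) by positivity)]
        ring
      · rw [hfv0, abs_mul, abs_of_nonneg
          (show (0:ℝ) ≤ (ρini (cell2 dx dy p.1 p.2)).toReal / (dx*dy) by positivity)]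
        ring
    | succ n ih =>
      obtain ⟨h0, hx, hy, e0, ex, ey⟩ := ih
      have hN : Summable fun p : ℤ × ℤ =>
          (1 + |(p.1:ℝ)| + |(p.2:ℝ)|) * |fvRho W winf dx dy dt ρini n p.1 p.2| :=
        ((h0.add hx).add hy).congr fun p => by rw [abs_mul, abs_mul]; ring
      have hw1 := step_weighted dt hW hdx hdy h0 hN (fun _ => 1) 0 0
        (fun p => by rw [abs_one]; linarith [abs_nonneg ((p.1:ℝ)), abs_nonneg ((p.2:ℝ))])
        (fun p e => by ring)
      have hwx := step_weighted dt hW hdx hdy h0 hN (fun p => (p.1:ℝ)) 1 0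
        (fun p => by linarith [abs_nonneg ((p.2:ℝ)), abs_nonneg ((p.1:ℝ))])
        (fun p e => by simp only [Prod.fst_add]; push_cast; ring)
      have hwy := step_weighted dt hW hdx hdy h0 hN (fun p => (p.2:ℝ)) 0 1
        (fun p => by linarith [abs_nonneg ((p.1:ℝ)), abs_nonneg ((p.2:ℝ))])
        (fun p e => by simp only [Prod.snd_add]; push_cast; ring)
      have hstep : ∀ p : ℤ × ℤ, fvRho W winf dx dy dt ρini (n+1) p.1 p.2 =
          fvStep W winf dx dy dt (fvRho W winf dx dy dt ρini n) p.1 p.2 := fun p => rfl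
      refine ⟨?_, ?_, ?_, ?_, ?_, ?_⟩
      · exact (summable_abs_iff.mpr (hw1.1.congr fun p => by
          rw [one_mul, ← hstep p])).congr fun p => rfl
      · exact summable_abs_iff.mpr (hwx.1.congr fun p => by rw [← hstep p])
      · exact summable_abs_iff.mpr (hwy.1.congr fun p => by rw [← hstep p])
      · calc ∑' p : ℤ × ℤ, fvRho W winf dx dy dt ρini (n+1) p.1 p.2
            = ∑' p : ℤ × ℤ, (fun _ : ℤ × ℤ => (1:ℝ)) p *
                fvStep W winf dx dy dt (fvRho W winf dx dy dt ρini n) p.1 p.2 :=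
              tsum_congr fun p => by rw [hstep p, one_mul]
          _ = ∑' p : ℤ × ℤ, (fun _ : ℤ × ℤ => (1:ℝ)) p * fvRho W winf dx dy dt ρini n p.1 p.2 :=
              hw1.2
          _ = ∑' p : ℤ × ℤ, fvRho W winf dx dy dt ρini n p.1 p.2 :=
              tsum_congr fun p => one_mul _
          _ = ∑' p : ℤ × ℤ, fvRho W winf dx dy dt ρini 0 p.1 p.2 := e0
      · calc ∑' p : ℤ × ℤ, (p.1:ℝ) * fvRho W winf dx dy dt ρini (n+1) p.1 p.2
            = ∑' p : ℤ × ℤ, (p.1:ℝ) *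
                fvStep W winf dx dy dt (fvRho W winf dx dy dt ρini n) p.1 p.2 :=
              tsum_congr fun p => by rw [hstep p]
          _ = ∑' p : ℤ × ℤ, (p.1:ℝ) * fvRho W winf dx dy dt ρini n p.1 p.2 := hwx.2
          _ = ∑' p : ℤ × ℤ, (p.1:ℝ) * fvRho W winf dx dy dt ρini 0 p.1 p.2 := ex
      · calc ∑' p : ℤ × ℤ, (p.2:ℝ) * fvRho W winf dx dy dt ρini (n+1) p.1 p.2
            = ∑' p : ℤ × ℤ, (p.2:ℝ) *
                fvStep W winf dx dy dt (fvRho W winf dx dy dt ρini n) p.1 p.2 :=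
              tsum_congr fun p => by rw [hstep p]
          _ = ∑' p : ℤ × ℤ, (p.2:ℝ) * fvRho W winf dx dy dt ρini n p.1 p.2 := hwy.2
          _ = ∑' p : ℤ × ℤ, (p.2:ℝ) * fvRho W winf dx dy dt ρini 0 p.1 p.2 := ey
  -- conclude
  intro n
  obtain ⟨h0, hx, hy, e0, ex, ey⟩ := H n
  have hmass0 : ∑' p : ℤ × ℤ, fvRho W winf dx dy dt ρini 0 p.1 p.2 = 1 / (dx*dy) := by
    calc ∑' p : ℤ × ℤ, fvRho W winf dx dy dt ρini 0 p.1 p.2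
        = ∑' p : ℤ × ℤ, (1/(dx*dy)) * (ρini (cell2 dx dy p.1 p.2)).toReal :=
          tsum_congr fun p => by rw [hfv0]; ring
      _ = (1/(dx*dy)) * ∑' p : ℤ × ℤ, (ρini (cell2 dx dy p.1 p.2)).toReal := tsum_mul_left
      _ = 1 / (dx*dy) := by rw [T0, mul_one]
  refine ⟨(summable_abs_iff.mp h0).mul_right _, ?_, ?_, ?_, ?_, ?_, ?_⟩
  · rw [tsum_mul_right, tsum_mul_right, e0]
  · rw [tsum_mul_right, e0, hmass0]
    field_simp
  · exact ((summable_abs_iff.mp hx).mul_left dx).congr fun p => by ring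
  · calc ∑' p : ℤ × ℤ, (p.1:ℝ) * dx * fvRho W winf dx dy dt ρini n p.1 p.2
        = ∑' p : ℤ × ℤ, dx * ((p.1:ℝ) * fvRho W winf dx dy dt ρini n p.1 p.2) :=
          tsum_congr fun p => by ring
      _ = dx * ∑' p : ℤ × ℤ, (p.1:ℝ) * fvRho W winf dx dy dt ρini n p.1 p.2 := tsum_mul_left
      _ = dx * ∑' p : ℤ × ℤ, (p.1:ℝ) * fvRho W winf dx dy dt ρini 0 p.1 p.2 := by rw [ex]
      _ = ∑' p : ℤ × ℤ, dx * ((p.1:ℝ) * fvRho W winf dx dy dt ρini 0 p.1 p.2) :=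
          tsum_mul_left.symm
      _ = ∑' p : ℤ × ℤ, (p.1:ℝ) * dx * fvRho W winf dx dy dt ρini 0 p.1 p.2 :=
          tsum_congr fun p => by ring
  · exact ((summable_abs_iff.mp hy).mul_left dy).congr fun p => by ring
  · calc ∑' p : ℤ × ℤ, (p.2:ℝ) * dy * fvRho W winf dx dy dt ρini n p.1 p.2
        = ∑' p : ℤ × ℤ, dy * ((p.2:ℝ) * fvRho W winf dx dy dt ρini n p.1 p.2) :=
          tsum_congr fun p => by ring
      _ = dy * ∑' p : ℤ × ℤ, (p.2:ℝ) * fvRho W winf dx dy dt ρini n p.1 p.2 := tsum_mul_left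
      _ = dy * ∑' p : ℤ × ℤ, (p.2:ℝ) * fvRho W winf dx dy dt ρini 0 p.1 p.2 := by rw [ey]
      _ = ∑' p : ℤ × ℤ, dy * ((p.2:ℝ) * fvRho W winf dx dy dt ρini 0 p.1 p.2) :=
          tsum_mul_left.symm
      _ = ∑' p : ℤ × ℤ, (p.2:ℝ) * dy * fvRho W winf dx dy dt ρini 0 p.1 p.2 :=
          tsum_congr fun p => by ring
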